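/- Let p ≥ 11 be a prime, t ∈ Z_p, and z a unit of Z_p. If x and x' are distinct elements of Z_p belonging to the same coset of Q_p in U(p) (i.e., both in Q_p or both in N_p = U(p) \ Q_p), then there exist c, c' ∈ Q_p with c·x + c'·x' = z and c + c' ≠ t. -/

import Mathlib

def Qp (p : ℕ) : Set (ZMod p) := {x | ∃ u : (ZMod p)ˣ, (u : ZMod p) ^ 2 = x}

def Np (p : ℕ) : Set (ZMod p) := {x | IsUnit x ∧ x ∉ Qp p}

open Finset

lemma isUnit_of_mem_Qp {p : ℕ} {x : ZMod p} (h : x ∈ Qp p) : IsUnit x := by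
  obtain ⟨u, hu⟩ := h
  exact ⟨u ^ 2, by rw [Units.val_pow_eq_pow_val]; exact hu⟩

lemma mem_Qp_of_char {p : ℕ} [Fact p.Prime] {w : ZMod p}
    (h : quadraticChar (ZMod p) w = 1) : w ∈ Qp p := by
  have hw : w ≠ 0 := by
    intro h0; rw [h0, MulChar.map_zero] at h; norm_num at h
  obtain ⟨r, hr⟩ := (quadraticChar_one_iff_isSquare hw).mp h
  have hr0 : r ≠ 0 := by rintro rfl; rw [mul_zero] at hr; exact hw hr
  obtain ⟨v, hv⟩ := hr0.isUnit
  exact ⟨v, by rw [sq, hv, ← hr]⟩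

lemma card_two_le (p : ℕ) [Fact p.Prime] (hp : 11 ≤ p) (a b : ZMod p)
    (ha : IsUnit a) (hb : IsUnit b) :
    2 ≤ (Finset.univ.filter (fun y : ZMod p =>
      quadraticChar (ZMod p) y = 1 ∧ quadraticChar (ZMod p) (b - a * y) = 1)).card := by
  classical
  set χ := quadraticChar (ZMod p) with hχdef
  have hp2 : ringChar (ZMod p) ≠ 2 := by
    rw [ZMod.ringChar_zmod_n]; omega
  have ha0 : a ≠ 0 := ha.ne_zero
  have hb0 : b ≠ 0 := hb.ne_zero
  set S := Finset.univ.filter (fun y : ZMod p => χ y = 1 ∧ χ (b - a * y) = 1) with hSdef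
  have hquad := quadraticChar_isQuadratic (ZMod p)
  have hba0 : b * a⁻¹ ≠ 0 := mul_ne_zero hb0 (inv_ne_zero ha0)
  -- the character sum J
  have hJ : ∑ y : ZMod p, χ y * χ (b - a * y)
      = (χ (b * a⁻¹) * χ b) * (-χ (-1)) := by
    have step : ∑ y : ZMod p, χ y * χ (b - a * y)
        = ∑ u : ZMod p, χ (b * a⁻¹ * u) * χ (b * (1 - u)) := by
      refine (Fintype.sum_equiv (Equiv.mulLeft₀ (b * a⁻¹) hba0)
        (fun u => χ (b * a⁻¹ * u) * χ (b * (1 - u)))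
        (fun y => χ y * χ (b - a * y)) (fun u => ?_)).symm
      have h1 : a * (b * a⁻¹ * u) = b * u := by
        rw [mul_comm b a⁻¹, ← mul_assoc, ← mul_assoc, mul_inv_cancel₀ ha0, one_mul]
      have h2 : b - a * (b * a⁻¹ * u) = b * (1 - u) := by
        rw [h1]; ring
      show χ (b * a⁻¹ * u) * χ (b * (1 - u))
          = χ ((Equiv.mulLeft₀ (b * a⁻¹) hba0) u)
            * χ (b - a * ((Equiv.mulLeft₀ (b * a⁻¹) hba0) u))
      simp only [Equiv.mulLeft₀_apply]
      rw [h2]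
    rw [step]
    have expand : ∀ u : ZMod p, χ (b * a⁻¹ * u) * χ (b * (1 - u))
        = (χ (b * a⁻¹) * χ b) * (χ u * χ (1 - u)) := by
      intro u; rw [map_mul χ (b * a⁻¹) u, map_mul χ b (1 - u)]; ring
    rw [Finset.sum_congr rfl (fun u _ => expand u), ← Finset.mul_sum]
    have hjac : ∑ u : ZMod p, χ u * χ (1 - u) = -χ (-1) := by
      have hne1 : χ ≠ 1 := quadraticChar_ne_one hp2
      have := jacobiSum_nontrivial_inv hne1
      rwa [hquad.inv, jacobiSum] at this
    rw [hjac]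
  -- total sum T
  have hT : ∑ y : ZMod p, (1 + χ y) * (1 + χ (b - a * y))
      = (p : ℤ) + (χ (b * a⁻¹) * χ b) * (-χ (-1)) := by
    have expand : ∀ y : ZMod p, (1 + χ y) * (1 + χ (b - a * y))
        = 1 + χ y + χ (b - a * y) + χ y * χ (b - a * y) := fun y => by ring
    rw [Finset.sum_congr rfl (fun y _ => expand y)]
    rw [Finset.sum_add_distrib, Finset.sum_add_distrib, Finset.sum_add_distrib]
    have h1 : ∑ _y : ZMod p, (1 : ℤ) = (p : ℤ) := by
      simp [ZMod.card p]
    have h2 : ∑ y : ZMod p, χ y = 0 := quadraticChar_sum_zero hp2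
    have h3 : ∑ y : ZMod p, χ (b - a * y) = 0 := by
      have := Fintype.sum_equiv ((Equiv.mulLeft₀ a ha0).trans (Equiv.subLeft b))
        (fun y => χ (b - a * y)) (fun w => χ w)
        (fun y => by simp [Equiv.mulLeft₀_apply])
      rw [this, h2]
    rw [h1, h2, h3, hJ]; ring
  -- lower bound on T
  have hJbound : (χ (b * a⁻¹) * χ b) * (-χ (-1)) ≥ -1 := by
    have q1 := hquad (b * a⁻¹)
    have q2 := hquad b
    have q3 := hquad (-1 : ZMod p)
    rw [← hχdef] at q1 q2 q3
    rcases q1 with h1 | h1 | h1 <;> rcases q2 with h2 | h2 | h2 <;>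
      rcases q3 with h3 | h3 | h3 <;> rw [h1, h2, h3] <;> norm_num
  have hTlower : (p : ℤ) - 1 ≤ ∑ y : ZMod p, (1 + χ y) * (1 + χ (b - a * y)) := by
    rw [hT]; linarith
  -- upper bound on T
  have hTupper : ∑ y : ZMod p, (1 + χ y) * (1 + χ (b - a * y))
      ≤ 4 * S.card + 4 := by
    have key : ∀ y : ZMod p, (1 + χ y) * (1 + χ (b - a * y))
        ≤ (if y ∈ S then 4 else 0) + ((if y = 0 then 2 else 0)
          + (if y = b * a⁻¹ then 2 else 0)) := by
      intro y
      have hu := hquad y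
      have hv := hquad (b - a * y)
      rw [← hχdef] at hu hv
      have hmem : y ∈ S ↔ (χ y = 1 ∧ χ (b - a * y) = 1) := by
        simp [hSdef]
      have hy0 : y = 0 ↔ χ y = 0 := by
        rw [hχdef, quadraticChar_eq_zero_iff]
      have hyba : y = b * a⁻¹ ↔ χ (b - a * y) = 0 := by
        rw [hχdef, quadraticChar_eq_zero_iff, sub_eq_zero]
        constructor
        · rintro rfl
          rw [mul_comm b a⁻¹, ← mul_assoc, mul_inv_cancel₀ ha0, one_mul]
        · intro h
          rw [h, mul_comm a y, mul_assoc, mul_inv_cancel₀ ha0, mul_one]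
      rw [if_congr hmem rfl rfl, if_congr hy0 rfl rfl, if_congr hyba rfl rfl]
      rcases hu with h1 | h1 | h1 <;> rcases hv with h2 | h2 | h2 <;>
        rw [h1, h2] <;> norm_num
    calc ∑ y : ZMod p, (1 + χ y) * (1 + χ (b - a * y))
        ≤ ∑ y : ZMod p, ((if y ∈ S then 4 else 0) + ((if y = 0 then 2 else 0)
          + (if y = b * a⁻¹ then (2:ℤ) else 0))) := Finset.sum_le_sum (fun y _ => key y)
      _ = 4 * S.card + 4 := by
          rw [Finset.sum_add_distrib, Finset.sum_add_distrib]
          rw [Finset.sum_ite_eq' Finset.univ (0 : ZMod p) (fun _ => (2:ℤ)),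
            Finset.sum_ite_eq' Finset.univ (b * a⁻¹) (fun _ => (2:ℤ))]
          have : ∑ y : ZMod p, (if y ∈ S then (4:ℤ) else 0) = 4 * S.card := by
            rw [Finset.sum_ite_mem, Finset.univ_inter, Finset.sum_const]
            simp [mul_comm]
          rw [this]
          simp
  have hcard : (p : ℤ) - 1 ≤ 4 * S.card + 4 := le_trans hTlower hTupper
  have hp' : (11 : ℤ) ≤ (p : ℤ) := by exact_mod_cast hp
  have h2 : (2 : ℤ) ≤ (S.card : ℤ) := by omega
  exact_mod_cast h2

theorem stmt_8 (p : ℕ) [Fact p.Prime] (hp : 11 ≤ p) (t : ZMod p) (z : ZMod p)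
    (hz : IsUnit z) (x x' : ZMod p) (hne : x ≠ x')
    (hcoset : (x ∈ Qp p ∧ x' ∈ Qp p) ∨ (x ∈ Np p ∧ x' ∈ Np p)) :
    ∃ c ∈ Qp p, ∃ c' ∈ Qp p, c * x + c' * x' = z ∧ c + c' ≠ t := by
  classical
  have hux : IsUnit x := hcoset.elim (fun h => isUnit_of_mem_Qp h.1) (fun h => h.1.1)
  have hux' : IsUnit x' := hcoset.elim (fun h => isUnit_of_mem_Qp h.2) (fun h => h.2.1)
  set a := x' * x⁻¹ with hadef
  set b := z * x⁻¹ with hbdef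
  have hxinv : IsUnit (x⁻¹ : ZMod p) :=
    IsUnit.of_mul_eq_one x (ZMod.inv_mul_of_unit x hux)
  have ha : IsUnit a := hux'.mul hxinv
  have hb : IsUnit b := hz.mul hxinv
  have ha1 : a ≠ 1 := by
    intro h
    apply hne
    have h2 : x' * x⁻¹ * x = 1 * x := by rw [← hadef, h]
    rwa [mul_assoc, ZMod.inv_mul_of_unit x hux, mul_one, one_mul, eq_comm] at h2
  obtain ⟨y₁, hy₁, y₂, hy₂, hyne⟩ :=
    Finset.one_lt_card.mp (lt_of_lt_of_le one_lt_two (card_two_le p hp a b ha hb))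
  simp only [Finset.mem_filter, Finset.mem_univ, true_and] at hy₁ hy₂
  have hsne : b + (1 - a) * y₁ ≠ b + (1 - a) * y₂ := by
    intro h
    apply hyne
    have h1a : (1 - a) ≠ 0 := sub_ne_zero.mpr (Ne.symm ha1)
    exact mul_left_cancel₀ h1a (add_left_cancel h)
  have main : ∀ y : ZMod p, quadraticChar (ZMod p) y = 1 →
      quadraticChar (ZMod p) (b - a * y) = 1 → b + (1 - a) * y ≠ t →
      ∃ c ∈ Qp p, ∃ c' ∈ Qp p, c * x + c' * x' = z ∧ c + c' ≠ t := by
    intro y h1 h2 hst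
    refine ⟨b - a * y, mem_Qp_of_char h2, y, mem_Qp_of_char h1, ?_, ?_⟩
    · rw [hbdef, hadef]
      have hxx : x⁻¹ * x = 1 := ZMod.inv_mul_of_unit x hux
      calc (z * x⁻¹ - x' * x⁻¹ * y) * x + y * x'
          = z * (x⁻¹ * x) - x' * (x⁻¹ * x) * y + y * x' := by ring
        _ = z := by rw [hxx]; ring
    · have h3 : b - a * y + y = b + (1 - a) * y := by ring
      rwa [h3]
  by_cases ht : b + (1 - a) * y₁ = t
  · exact main y₂ hy₂.1 hy₂.2 (fun h => hsne (h.trans ht.symm).symm)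
  · exact main y₁ hy₁.1 hy₁.2 ht
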